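/- For every p ∈ 𝕋³ the function q ↦ φ(q)²/w(p,q) (defined for a.e. q ∈ 𝕋³) is integrable on 𝕋³, i.e. ∫_{𝕋³} φ(q)²/w(p,q) dq < ∞. -/

import Mathlib

open MeasureTheory Real Filter

noncomputable section

instance : Fact (0 < 2 * Real.pi) := ⟨by positivity⟩

/-- the circle `ℝ/2πℤ`. -/
abbrev 𝕋 : Type := AddCircle (2 * Real.pi)

/-- the three-dimensional torus `𝕋³ = (ℝ/2πℤ)³`, carrying the product of the Haar
(Lebesgue) measures of total mass `2π`; its total mass is `(2π)³`. -/
abbrev T3 : Type := Fin 3 → 𝕋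

/-- the cosine function, lifted to the circle of circumference `2π`. -/
def ccos : 𝕋 → ℝ := Real.cos_periodic.lift

/-- the dispersion function `ε(p) = ∑_{j=1}^3 (1 - cos (m p⁽ʲ⁾))`. -/
def eps (m : ℕ) (p : T3) : ℝ := ∑ j : Fin 3, (1 - ccos (m • p j))

/-- the function `w(p,q) = ε(p) + ε(p+q) + ε(q)`. -/
def w (m : ℕ) (p q : T3) : ℝ := eps m p + eps m (p + q) + eps m q

/-- the representative of a point of `𝕋` in `[-π, π)`. -/
def rep (x : 𝕋) : ℝ := ((AddCircle.equivIco (2 * Real.pi) (-Real.pi)) x : ℝ)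

/-- Euclidean norm of the representative (in `[-π,π)³`) of a point of the torus. -/
def tnorm (p : T3) : ℝ := Real.sqrt (∑ j : Fin 3, rep (p j) ^ 2)

/-- Euclidean inner product of the representatives of two points of the torus. -/
def tinner (p q : T3) : ℝ := ∑ j : Fin 3, rep (p j) * rep (q j)

/-- a function on the torus is real-analytic if it lifts to an analytic
(automatically `2π`-periodic) function on `ℝ³`. -/
def TorusAnalytic (φ : T3 → ℝ) : Prop :=
  ∃ Φ : (Fin 3 → ℝ) → ℝ, (∀ x, AnalyticAt ℝ Φ x) ∧
    ∀ x : Fin 3 → ℝ, Φ x = φ (fun j => (x j : 𝕋))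

/-- evenness of a function on the torus. -/
def TorusEven (φ : T3 → ℝ) : Prop := ∀ p : T3, φ (-p) = φ p

/-- the Fredholm determinant `Δ_μ(p; z) = 1 - μ ∫_{𝕋³} φ(q)²/(w(p,q) - z) dq`. -/
def Delta (m : ℕ) (φ : T3 → ℝ) (μ : ℝ) (p : T3) (z : ℝ) : ℝ :=
  1 - μ * ∫ q : T3, φ q ^ 2 / (w m p q - z)

namespace IntegAux

lemma ccos_coe (t : ℝ) : ccos (t : 𝕋) = Real.cos t := Real.cos_periodic.lift_coe t

lemma coe_nsmul (n : ℕ) (t : ℝ) : ((n • t : ℝ) : 𝕋) = n • (t : 𝕋) :=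
  map_nsmul (QuotientAddGroup.mk' (AddSubgroup.zmultiples (2 * Real.pi))) n t

lemma ccos_nsmul_coe (n : ℕ) (t : ℝ) : ccos (n • (t : 𝕋)) = Real.cos (n * t) := by
  rw [← coe_nsmul, ccos_coe, nsmul_eq_mul]

lemma ccos_le_one (y : 𝕋) : ccos y ≤ 1 := by
  obtain ⟨t, rfl⟩ := QuotientAddGroup.mk_surjective y
  rw [show (QuotientAddGroup.mk t : 𝕋) = ((t : ℝ) : 𝕋) from rfl, ccos_coe]
  exact Real.cos_le_one t

lemma continuous_ccos : Continuous ccos :=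
  Real.continuous_cos.quotient_liftOn' _

lemma eps_nonneg (m : ℕ) (q : T3) : 0 ≤ eps m q :=
  Finset.sum_nonneg fun j _ => by linarith [ccos_le_one (m • q j)]

lemma continuous_eps (m : ℕ) : Continuous (eps m) := by
  refine continuous_finset_sum _ fun j _ => ?_
  exact continuous_const.sub (continuous_ccos.comp ((continuous_apply j).nsmul m))

lemma measurable_rpow_const (e : ℝ) : Measurable fun x : ℝ => x ^ e := by
  refine measurable_of_continuousOn_compl_singleton 0 ?_
  intro x hx
  exact (Real.continuousAt_rpow_const x e (Or.inl hx)).continuousWithinAt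

/-- Jordan-type quadratic lower bound for `1 - cos`. -/
lemma one_sub_cos_ge {s : ℝ} (hs : |s| ≤ Real.pi) :
    2 / Real.pi ^ 2 * s ^ 2 ≤ 1 - Real.cos s := by
  have hπ : (0:ℝ) < Real.pi := Real.pi_pos
  have h1 : Real.sin (s / 2) ^ 2 = 1 / 2 - Real.cos s / 2 := by
    have := Real.sin_sq_eq_half_sub (s / 2)
    rwa [mul_div_cancel₀ s (two_ne_zero)] at this
  have h3 : Real.sin (|s| / 2) ^ 2 = Real.sin (s / 2) ^ 2 := by
    rcases abs_choice s with h | h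
    · rw [h]
    · rw [h, neg_div, Real.sin_neg, neg_sq]
  have h2 : 2 / Real.pi * (|s| / 2) ≤ Real.sin (|s| / 2) :=
    Real.mul_le_sin (by positivity) (by linarith [abs_nonneg s])
  have h4 : (2 / Real.pi * (|s| / 2)) ^ 2 ≤ Real.sin (|s| / 2) ^ 2 :=
    pow_le_pow_left₀ (by positivity) h2 2
  have h5 : (2 / Real.pi * (|s| / 2)) ^ 2 = s ^ 2 / Real.pi ^ 2 := by
    rw [mul_pow, div_pow, div_pow, sq_abs]; field_simp
  rw [h5, h3, h1] at h4
  have hπ2 : (0:ℝ) < Real.pi ^ 2 := by positivity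
  rw [div_mul_eq_mul_div, div_le_iff₀ hπ2] at *
  nlinarith

lemma cos_neg_two_thirds_pi : Real.cos (-(2 / 3) * Real.pi) = -(1 / 2) := by
  rw [show (-(2/3) : ℝ) * Real.pi = -(2 / 3 * Real.pi) by ring, Real.cos_neg,
    show (2 / 3 : ℝ) * Real.pi = Real.pi - Real.pi / 3 by ring, Real.cos_pi_sub,
    Real.cos_pi_div_three]

lemma abs_rpow_le_two_mul (x : ℝ) :
    |x| ^ (-(2/3) : ℝ) ≤ 2 * |x ^ (-(2/3) : ℝ)| := by
  rcases lt_trichotomy x 0 with hx | rfl | hx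
  · have hx' : (0:ℝ) < |x| := abs_pos.2 hx.ne
    rw [Real.rpow_def_of_neg hx, Real.rpow_def_of_pos hx', Real.log_abs,
      cos_neg_two_thirds_pi, abs_mul, abs_neg, abs_of_pos (Real.exp_pos _),
      abs_of_pos (by norm_num : (0:ℝ) < 1/2)]
    rw [mul_comm (2:ℝ), mul_assoc]
    norm_num
  · simp [Real.zero_rpow (by norm_num : (-(2/3) : ℝ) ≠ 0)]
  · rw [abs_of_pos hx, abs_of_nonneg (Real.rpow_nonneg hx.le _)]
    nlinarith [Real.rpow_nonneg hx.le (-(2/3) : ℝ)]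

lemma integrableOn_abs_rpow (c : ℝ) :
    IntegrableOn (fun t : ℝ => |t - c| ^ (-(2/3) : ℝ)) (Set.Ioc 0 (2 * Real.pi)) := by
  have hii : IntervalIntegrable (fun t : ℝ => (t - c) ^ (-(2/3) : ℝ)) volume 0 (2 * Real.pi) := by
    have h := (intervalIntegral.intervalIntegrable_rpow'
      (show (-1 : ℝ) < -(2/3) by norm_num) (a := 0 - c) (b := 2 * Real.pi - c)).comp_sub_right c
    simpa using h
  have h2 : IntegrableOn (fun t : ℝ => (t - c) ^ (-(2/3) : ℝ)) (Set.Ioc 0 (2 * Real.pi)) :=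
    (intervalIntegrable_iff_integrableOn_Ioc_of_le (by positivity)).1 hii
  refine Integrable.mono' (h2.norm.const_mul 2) ?_ ?_
  · exact (((measurable_rpow_const _).comp
      ((measurable_id.sub_const c).abs)).aestronglyMeasurable)
  · refine Filter.Eventually.of_forall fun t => ?_
    have h0 : (0:ℝ) ≤ |t - c| ^ (-(2/3) : ℝ) := Real.rpow_nonneg (abs_nonneg _) _
    rw [Real.norm_eq_abs, abs_of_nonneg h0]
    simpa [Real.norm_eq_abs] using abs_rpow_le_two_mul (t - c)

lemma integrableOn_one_sub_cos (m : ℕ) (hm : 0 < m) :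
    IntegrableOn (fun t : ℝ => (1 - Real.cos (m * t)) ^ (-(1/3) : ℝ))
      (Set.Ioc 0 (2 * Real.pi)) := by
  have hπ : (0:ℝ) < Real.pi := Real.pi_pos
  set C : ℝ := (2 * (m:ℝ) ^ 2 / Real.pi ^ 2) ^ (-(1/3) : ℝ) with hC
  have hC0 : 0 ≤ C := Real.rpow_nonneg (by positivity) _
  set S : ℝ → ℝ := fun t => ∑ k ∈ Finset.range (m + 1),
    |t - 2 * Real.pi * k / m| ^ (-(2/3) : ℝ) with hS
  have hSint : IntegrableOn S (Set.Ioc 0 (2 * Real.pi)) :=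
    integrable_finset_sum _ fun k _ => integrableOn_abs_rpow _
  have hSnn : ∀ t, 0 ≤ S t := fun t =>
    Finset.sum_nonneg fun k _ => Real.rpow_nonneg (abs_nonneg _) _
  refine Integrable.mono' (hSint.const_mul C) ?_ ?_
  · exact ((measurable_rpow_const _).comp
      ((measurable_const.sub (Real.measurable_cos.comp
        (measurable_id.const_mul (m:ℝ)))))).aestronglyMeasurable
  · rw [ae_restrict_iff' measurableSet_Ioc]
    refine Filter.Eventually.of_forall fun t ht => ?_
    obtain ⟨ht0, ht2⟩ := ht
    set x : ℝ := (m:ℝ) * t / (2 * Real.pi) with hx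
    set k₀ : ℤ := round x with hk₀
    have hkx : |x - k₀| ≤ 1 / 2 := abs_sub_round x
    have hs : |(m:ℝ) * t - 2 * Real.pi * k₀| ≤ Real.pi := by
      have : (m:ℝ) * t - 2 * Real.pi * k₀ = (x - k₀) * (2 * Real.pi) := by
        field_simp [hx]
        rw [hx, mul_sub, mul_div_cancel₀ _ (by positivity : (2 * Real.pi) ≠ 0)]
      rw [this, abs_mul, abs_of_pos (by positivity : (0:ℝ) < 2 * Real.pi)]
      nlinarith
    have hcos : Real.cos ((m:ℝ) * t) = Real.cos ((m:ℝ) * t - 2 * Real.pi * k₀) := by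
      have h := Real.cos_add_int_mul_two_pi ((m:ℝ) * t - 2 * Real.pi * k₀) k₀
      rw [show (m:ℝ) * t - 2 * Real.pi * k₀ + (k₀ : ℝ) * (2 * Real.pi) = (m:ℝ) * t by ring] at h
      exact h
    have hge : 2 / Real.pi ^ 2 * ((m:ℝ) * t - 2 * Real.pi * k₀) ^ 2
        ≤ 1 - Real.cos ((m:ℝ) * t) := by
      rw [hcos]; exact one_sub_cos_ge hs
    -- bounds on k₀
    have hx0 : 0 < x := by positivity
    have hxm : x ≤ m := by
      rw [hx, div_le_iff₀ (by positivity : (0:ℝ) < 2 * Real.pi)]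
      nlinarith
    have hk0 : (0:ℤ) ≤ k₀ := by
      by_contra hcon
      push_neg at hcon
      have h1 : k₀ ≤ -1 := by omega
      have h2 : (k₀ : ℝ) ≤ -1 := by exact_mod_cast h1
      have h3 := abs_le.1 hkx
      linarith [h3.1, h3.2]
    have hkm : k₀ ≤ (m:ℤ) := by
      have : (k₀ : ℝ) < (m:ℝ) + 1 := by
        have := abs_le.1 hkx
        nlinarith
      exact_mod_cast Int.lt_add_one_iff.1 (by exact_mod_cast this)
    set k : ℕ := k₀.toNat with hk
    have hkk : (k : ℝ) = (k₀ : ℝ) := by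
      rw [hk]; exact_mod_cast congrArg Int.cast (Int.toNat_of_nonneg hk0)
    have hkmem : k ∈ Finset.range (m + 1) := by
      refine Finset.mem_range.2 ?_
      omega
    set z : ℝ := 2 * Real.pi * k / m with hz
    have hmz : (m:ℝ) * (t - z) = (m:ℝ) * t - 2 * Real.pi * k₀ := by
      rw [hz, hkk]; field_simp
    have hd0 : 0 ≤ 1 - Real.cos ((m:ℝ) * t) := by linarith [Real.cos_le_one ((m:ℝ) * t)]
    rcases eq_or_lt_of_le hd0 with hd | hd
    · rw [← hd, Real.zero_rpow (by norm_num : (-(1/3) : ℝ) ≠ 0), norm_zero]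
      exact mul_nonneg hC0 (hSnn t)
    · -- main case
      have htz : t - z ≠ 0 := by
        intro h
        have h1 : (m:ℝ) * t - 2 * Real.pi * k₀ = 0 := by rw [← hmz, h, mul_zero]
        rw [hcos, h1, Real.cos_zero] at hd
        simp at hd
      have hkey : 2 * (m:ℝ) ^ 2 / Real.pi ^ 2 * (t - z) ^ 2 ≤ 1 - Real.cos ((m:ℝ) * t) := by
        have : 2 * (m:ℝ) ^ 2 / Real.pi ^ 2 * (t - z) ^ 2
            = 2 / Real.pi ^ 2 * ((m:ℝ) * (t - z)) ^ 2 := by ring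
        rw [this, hmz]; exact hge
      have hpos : 0 < 2 * (m:ℝ) ^ 2 / Real.pi ^ 2 * (t - z) ^ 2 := by
        have h2 : 0 < (t - z) ^ 2 := pow_two_pos_of_ne_zero htz
        positivity
      have step1 : (1 - Real.cos ((m:ℝ) * t)) ^ (-(1/3) : ℝ)
          ≤ (2 * (m:ℝ) ^ 2 / Real.pi ^ 2 * (t - z) ^ 2) ^ (-(1/3) : ℝ) :=
        Real.rpow_le_rpow_of_nonpos hpos hkey (by norm_num)
      have step2 : (2 * (m:ℝ) ^ 2 / Real.pi ^ 2 * (t - z) ^ 2) ^ (-(1/3) : ℝ)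
          = C * |t - z| ^ (-(2/3) : ℝ) := by
        rw [Real.mul_rpow (by positivity) (sq_nonneg _), hC]
        congr 1
        rw [← sq_abs, ← Real.rpow_natCast |t - z| 2, ← Real.rpow_mul (abs_nonneg _)]
        norm_num
      have step3 : |t - z| ^ (-(2/3) : ℝ) ≤ S t := by
        rw [hS]
        have := Finset.single_le_sum
          (f := fun k : ℕ => |t - 2 * Real.pi * k / m| ^ (-(2/3) : ℝ))
          (fun i _ => Real.rpow_nonneg (abs_nonneg _) _) hkmem
        simpa [hz] using this
      have hnn : 0 ≤ (1 - Real.cos ((m:ℝ) * t)) ^ (-(1/3) : ℝ) := Real.rpow_nonneg hd0 _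
      rw [Real.norm_eq_abs, abs_of_nonneg hnn]
      calc (1 - Real.cos ((m:ℝ) * t)) ^ (-(1/3) : ℝ)
          ≤ C * |t - z| ^ (-(2/3) : ℝ) := by rw [← step2]; exact step1
        _ ≤ C * S t := mul_le_mul_of_nonneg_left step3 hC0

/-- the single-variable function on the circle whose product dominates things. -/
def g (m : ℕ) (y : 𝕋) : ℝ := (1 - ccos (m • y)) ^ (-(1/3) : ℝ)

lemma measurable_g (m : ℕ) : Measurable (g m) := by
  refine (measurable_rpow_const _).comp ?_
  exact (continuous_const.sub (continuous_ccos.comp (continuous_id.nsmul m))).measurable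

lemma integrable_g (m : ℕ) (hm : 0 < m) : Integrable (g m) (volume : Measure 𝕋) := by
  have hmp : MeasurePreserving (fun t : ℝ => (t : 𝕋))
      (volume.restrict (Set.Ioc 0 (0 + 2 * Real.pi))) volume :=
    AddCircle.measurePreserving_mk (2 * Real.pi) 0
  refine (hmp.integrable_comp (measurable_g m).aestronglyMeasurable).1 ?_
  have : (g m ∘ fun t : ℝ => (t : 𝕋))
      = fun t : ℝ => (1 - Real.cos (m * t)) ^ (-(1/3) : ℝ) := by
    funext t
    simp only [Function.comp_apply, g, ccos_nsmul_coe]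
  rw [this, zero_add]
  exact integrableOn_one_sub_cos m hm

lemma g_nonneg (m : ℕ) (y : 𝕋) : 0 ≤ g m y :=
  Real.rpow_nonneg (by linarith [ccos_le_one (m • y)]) _

/-- the set of bad points on the circle is null. -/
lemma null_bad (m : ℕ) (hm : 0 < m) :
    (volume : Measure 𝕋) {y : 𝕋 | 1 - ccos (m • y) ≤ 0} = 0 := by
  have hcont : Continuous fun y : 𝕋 => 1 - ccos (m • y) :=
    continuous_const.sub (continuous_ccos.comp (continuous_id.nsmul m))
  have hZm : MeasurableSet {y : 𝕋 | 1 - ccos (m • y) ≤ 0} :=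
    (isClosed_le hcont continuous_const).measurableSet
  have hmp := AddCircle.measurePreserving_mk (2 * Real.pi) 0
  have hm' : ((m:ℝ)) ≠ 0 := by positivity
  have hpre : (((↑) : ℝ → 𝕋) ⁻¹' {y : 𝕋 | 1 - ccos (m • y) ≤ 0}) ⊆
      Set.range (fun k : ℤ => (k : ℝ) * (2 * Real.pi) / m) := by
    intro t ht
    have h2 : 1 - Real.cos ((m:ℝ) * t) ≤ 0 := by
      have h := ccos_nsmul_coe m t
      have ht' : 1 - ccos (m • (t : 𝕋)) ≤ 0 := ht
      rwa [h] at ht'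
    have h1 : Real.cos ((m:ℝ) * t) = 1 :=
      le_antisymm (Real.cos_le_one _) (by linarith)
    obtain ⟨n, hn⟩ := (Real.cos_eq_one_iff _).1 h1
    refine ⟨n, ?_⟩
    rw [div_eq_iff hm']
    linarith [hn]
  refine le_zero_iff.1 ?_
  calc (volume : Measure 𝕋) {y : 𝕋 | 1 - ccos (m • y) ≤ 0}
      = (volume.restrict (Set.Ioc 0 (0 + 2 * Real.pi)))
          (((↑) : ℝ → 𝕋) ⁻¹' {y : 𝕋 | 1 - ccos (m • y) ≤ 0}) :=
        (hmp.measure_preimage hZm.nullMeasurableSet).symm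
    _ ≤ volume (((↑) : ℝ → 𝕋) ⁻¹' {y : 𝕋 | 1 - ccos (m • y) ≤ 0}) :=
        Measure.restrict_apply_le _ _
    _ ≤ volume (Set.range (fun k : ℤ => (k : ℝ) * (2 * Real.pi) / m)) :=
        measure_mono hpre
    _ = 0 := (Set.countable_range _).measure_zero volume

end IntegAux

/-- For every `p ∈ 𝕋³` the function `q ↦ φ(q)²/w(p,q)` is integrable on `𝕋³`. -/
theorem integrable_phi_sq_div_w (m : ℕ) (hm : 3 ≤ m)
    (φ : T3 → ℝ) (hφa : TorusAnalytic φ) (hφe : TorusEven φ) (p : T3) :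
    Integrable (fun q : T3 => φ q ^ 2 / w m p q) volume := by
  have hm0 : 0 < m := by omega
  obtain ⟨Φ, hΦa, hΦeq⟩ := hφa
  have hΦc : Continuous Φ := continuous_iff_continuousAt.2 fun x => (hΦa x).continuousAt
  have hrepmem : ∀ y : 𝕋, rep y ∈ Set.Ico (-Real.pi) Real.pi := by
    intro y
    have h := ((AddCircle.equivIco (2 * Real.pi) (-Real.pi)) y).2
    exact ⟨h.1, by have h2 : rep y < -Real.pi + 2 * Real.pi := h.2; linarith⟩
  have hcoerep : ∀ y : 𝕋, ((rep y : ℝ) : 𝕋) = y := fun y =>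
    (AddCircle.equivIco (2 * Real.pi) (-Real.pi)).symm_apply_apply y
  have hφrep : ∀ q : T3, φ q = Φ (fun j => rep (q j)) := by
    intro q
    rw [hΦeq (fun j => rep (q j))]
    congr 1
    funext j
    exact (hcoerep (q j)).symm
  obtain ⟨C, hC⟩ := (isCompact_Icc (a := fun _ : Fin 3 => -Real.pi)
      (b := fun _ => Real.pi)).exists_bound_of_continuousOn hΦc.continuousOn
  have hφbdd : ∀ q, |φ q| ≤ C := by
    intro q
    rw [hφrep q, ← Real.norm_eq_abs]
    refine hC _ ?_
    rw [Set.mem_Icc]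
    refine ⟨fun j => (hrepmem (q j)).1, fun j => le_of_lt (hrepmem (q j)).2⟩
  have hC0 : 0 ≤ C := le_trans (abs_nonneg _) (hφbdd fun _ => 0)
  have hrepm : Measurable rep :=
    measurable_subtype_coe.comp
      (AddCircle.measurableEquivIco (T := 2 * Real.pi) (-Real.pi)).measurable
  have hφm : Measurable φ := by
    have h : φ = fun q => Φ (fun j => rep (q j)) := funext hφrep
    rw [h]
    exact hΦc.measurable.comp
      (measurable_pi_lambda _ fun j => hrepm.comp (measurable_pi_apply j))
  have hwc : Continuous fun q : T3 => w m p q := by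
    unfold w
    exact (continuous_const.add ((IntegAux.continuous_eps m).comp
      (continuous_const.add continuous_id))).add (IntegAux.continuous_eps m)
  have hfm : AEStronglyMeasurable (fun q : T3 => φ q ^ 2 / w m p q) volume :=
    ((hφm.pow_const 2).div hwc.measurable).aestronglyMeasurable
  have hGint : Integrable (fun q : T3 => ∏ j, IntegAux.g m (q j)) volume :=
    Integrable.fintype_prod fun _ => IntegAux.integrable_g m hm0
  have hae : ∀ᵐ q : T3, ∀ j : Fin 3, 0 < 1 - ccos (m • q j) := by
    rw [ae_all_iff]
    intro j
    have hsub : {q : T3 | ¬ 0 < 1 - ccos (m • q j)} ⊆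
        (fun q : T3 => q j) ⁻¹' {y : 𝕋 | 1 - ccos (m • y) ≤ 0} := by
      intro q hq
      exact not_lt.1 hq
    refine measure_mono_null hsub ?_
    exact Measure.pi_eval_preimage_null _ (IntegAux.null_bad m hm0)
  refine Integrable.mono' (hGint.const_mul (C ^ 2 / 3)) hfm ?_
  filter_upwards [hae] with q hq
  have e0 := hq 0
  have e1 := hq 1
  have e2 := hq 2
  have hP : (1 - ccos (m • q 0)) ^ ((1:ℝ)/3) * (1 - ccos (m • q 1)) ^ ((1:ℝ)/3)
      * (1 - ccos (m • q 2)) ^ ((1:ℝ)/3)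
      ≤ 1/3 * (1 - ccos (m • q 0)) + 1/3 * (1 - ccos (m • q 1))
        + 1/3 * (1 - ccos (m • q 2)) :=
    Real.geom_mean_le_arith_mean3_weighted (by norm_num) (by norm_num) (by norm_num)
      e0.le e1.le e2.le (by norm_num)
  have hepsq : eps m q = (1 - ccos (m • q 0)) + (1 - ccos (m • q 1))
      + (1 - ccos (m • q 2)) := by
    rw [eps, Fin.sum_univ_three]
  have hPpos : 0 < (1 - ccos (m • q 0)) ^ ((1:ℝ)/3) * (1 - ccos (m • q 1)) ^ ((1:ℝ)/3)
      * (1 - ccos (m • q 2)) ^ ((1:ℝ)/3) :=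
    mul_pos (mul_pos (Real.rpow_pos_of_pos e0 _) (Real.rpow_pos_of_pos e1 _))
      (Real.rpow_pos_of_pos e2 _)
  have hwge : 3 * ((1 - ccos (m • q 0)) ^ ((1:ℝ)/3) * (1 - ccos (m • q 1)) ^ ((1:ℝ)/3)
      * (1 - ccos (m • q 2)) ^ ((1:ℝ)/3)) ≤ w m p q := by
    have h1 := IntegAux.eps_nonneg m p
    have h2 := IntegAux.eps_nonneg m (p + q)
    rw [w, hepsq]
    linarith
  have hwpos : 0 < w m p q := lt_of_lt_of_le (by linarith) hwge
  have hfnn : 0 ≤ φ q ^ 2 / w m p q := div_nonneg (sq_nonneg _) hwpos.le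
  rw [Real.norm_eq_abs, abs_of_nonneg hfnn]
  have hφ2 : φ q ^ 2 ≤ C ^ 2 := by
    have h := hφbdd q
    nlinarith [abs_nonneg (φ q), sq_abs (φ q)]
  have hdiv : φ q ^ 2 / w m p q ≤ C ^ 2
      / (3 * ((1 - ccos (m • q 0)) ^ ((1:ℝ)/3) * (1 - ccos (m • q 1)) ^ ((1:ℝ)/3)
        * (1 - ccos (m • q 2)) ^ ((1:ℝ)/3))) :=
    div_le_div₀ (by positivity) hφ2 (by linarith) hwge
  refine hdiv.trans (le_of_eq ?_)
  have hprod : (∏ j, IntegAux.g m (q j)) = ((1 - ccos (m • q 0)) ^ ((1:ℝ)/3)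
      * (1 - ccos (m • q 1)) ^ ((1:ℝ)/3) * (1 - ccos (m • q 2)) ^ ((1:ℝ)/3))⁻¹ := by
    rw [Fin.prod_univ_three]
    simp only [IntegAux.g]
    rw [show (-(1/3) : ℝ) = -(1/3 : ℝ) from rfl]
    rw [Real.rpow_neg e0.le, Real.rpow_neg e1.le, Real.rpow_neg e2.le, mul_inv, mul_inv]
  rw [hprod, ← div_div, div_eq_mul_inv]

end
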